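/- Let Z be an offspring random variable in the domain of attraction of an α-stable law, α ∈ (1,2], with E[Z] = 1, so that κ_{Z−1}(t) = log E[e^{−t(Z−1)}] is regularly varying at 0 with index α: κ_{Z−1}(t) ∼ λ·t^α·ℓ(1/t)^{−α} for a slowly varying ℓ and λ > 0. Then the inverse function satisfies κ_{Z−1}^{−1}(t) ∼ t^{1/α}/(λ^{1/α}·L(1/t)) as t → 0, for a suitable slowly varying L, and consequently 1 − g_V(1−s) ∼ s^{1/α}/(λ^{1/α}·L(1/s)) as s → 0, where V is the total progeny. -/

import Mathlib

open Filter Topology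

/-- `L` is slowly varying at `+∞`. -/
def SlowlyVaryingAtTop (L : ℝ → ℝ) : Prop :=
  ∀ y > (0 : ℝ), Tendsto (fun x => L (x * y) / L x) atTop (nhds 1)

/- STATEMENT 10: If `κ = κ_{Z−1}` satisfies `κ(t) ∼ λ·t^α·ℓ(1/t)^{−α}` as `t → 0⁺`
(`ℓ` slowly varying, `λ > 0`, `α ∈ (1,2]`), is strictly increasing from `κ(0) = 0` with
inverse `κinv`, and `g_V(e^{−t}) = e^{−κinv(t)}` (i.e. `κ_V = −κinv`), then there is a
slowly varying `L` with `κinv(t) ∼ t^{1/α}/(λ^{1/α}·L(1/t))` as `t → 0⁺`, and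
consequently `1 − g_V(1−s) ∼ s^{1/α}/(λ^{1/α}·L(1/s))` as `s → 0⁺`. -/
theorem stmt_10 (κ κinv gV ℓ : ℝ → ℝ) (lam α : ℝ)
    (hα : 1 < α) (hα2 : α ≤ 2) (hlam : 0 < lam)
    (hℓ : SlowlyVaryingAtTop ℓ) (hℓpos : ∀ x > (0 : ℝ), 0 < ℓ x)
    (hκasym : Tendsto (fun t => κ t / (lam * t ^ α / ℓ (1 / t) ^ α))
      (nhdsWithin 0 (Set.Ioi 0)) (nhds 1))
    (hmono : StrictMonoOn κ (Set.Ici 0)) (hκ0 : κ 0 = 0)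
    (hinv : ∀ t ≥ (0 : ℝ), 0 ≤ κinv t ∧ κ (κinv t) = t ∧ κinv (κ t) = t)
    (hgv : ∀ t ≥ (0 : ℝ), gV (Real.exp (-t)) = Real.exp (-(κinv t))) :
    ∃ L : ℝ → ℝ, SlowlyVaryingAtTop L ∧ (∀ x > (0 : ℝ), 0 < L x) ∧
      Tendsto (fun t => κinv t / (t ^ (1 / α) / (lam ^ (1 / α) * L (1 / t))))
        (nhdsWithin 0 (Set.Ioi 0)) (nhds 1) ∧
      Tendsto (fun s => (1 - gV (1 - s)) / (s ^ (1 / α) / (lam ^ (1 / α) * L (1 / s))))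
        (nhdsWithin 0 (Set.Ioi 0)) (nhds 1) := by
  have hα0 : (0:ℝ) < α := lt_trans one_pos hα
  have hαne : α ≠ 0 := ne_of_gt hα0
  -- basic positivity
  have hκpos : ∀ a : ℝ, 0 < a → 0 < κ a := by
    intro a ha
    have := hmono (Set.mem_Ici.mpr le_rfl) (Set.mem_Ici.mpr ha.le) ha
    rwa [hκ0] at this
  have hinvpos : ∀ s : ℝ, 0 < s → 0 < κinv s := by
    intro s hs
    obtain ⟨h1, h2, -⟩ := hinv s hs.le
    rcases h1.lt_or_eq with h | h
    · exact h
    · exfalso; rw [← h, hκ0] at h2; linarith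
  have hinvmono : ∀ s s' : ℝ, 0 ≤ s → s ≤ s' → κinv s ≤ κinv s' := by
    intro s s' hs hss
    obtain ⟨h1, h2, -⟩ := hinv s hs
    obtain ⟨h1', h2', -⟩ := hinv s' (hs.trans hss)
    exact (hmono.le_iff_le (Set.mem_Ici.mpr h1) (Set.mem_Ici.mpr h1')).mp
      (by rw [h2, h2']; exact hss)
  have hinvT0 : Tendsto κinv (𝓝[>] (0:ℝ)) (𝓝 0) := by
    rw [Metric.tendsto_nhds]
    intro ε hε
    have hκε : 0 < κ (ε/2) := hκpos _ (half_pos hε)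
    filter_upwards [Ioo_mem_nhdsGT_of_mem (Set.mem_Ico.mpr ⟨le_rfl, hκε⟩)] with s hs
    have h1 : κinv s ≤ ε/2 := by
      have h3 := (hinv (ε/2) (half_pos hε).le).2.2
      calc κinv s ≤ κinv (κ (ε/2)) := hinvmono _ _ hs.1.le hs.2.le
        _ = ε/2 := h3
    have h2 : 0 ≤ κinv s := (hinv s hs.1.le).1
    rw [Real.dist_eq]
    rw [abs_sub_lt_iff]
    constructor <;> linarith
  have hinvT : Tendsto κinv (𝓝[>] (0:ℝ)) (𝓝[>] (0:ℝ)) := by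
    rw [tendsto_nhdsWithin_iff]
    refine ⟨hinvT0, ?_⟩
    filter_upwards [self_mem_nhdsWithin] with s hs
    exact Set.mem_Ioi.mpr (hinvpos s hs)
  -- ratio lemma
  have κratio : ∀ r : ℝ, 0 < r →
      Tendsto (fun a => κ (r*a) / κ a) (𝓝[>] (0:ℝ)) (𝓝 (r ^ α)) := by
    intro r hr
    have mapsmul : Tendsto (fun a : ℝ => r * a) (𝓝[>] (0:ℝ)) (𝓝[>] (0:ℝ)) := by
      rw [tendsto_nhdsWithin_iff]
      constructor
      · have h0 : Tendsto (fun a : ℝ => r * a) (𝓝 (0:ℝ)) (𝓝 (r * 0)) :=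
          (continuous_const.mul continuous_id).tendsto 0
        rw [mul_zero] at h0
        exact h0.mono_left nhdsWithin_le_nhds
      · filter_upwards [self_mem_nhdsWithin] with a ha
        exact Set.mem_Ioi.mpr (mul_pos hr ha)
    have hoinv : Tendsto (fun a : ℝ => 1/(r*a)) (𝓝[>] (0:ℝ)) atTop := by
      exact Tendsto.congr (fun a => by simp [Function.comp, one_div]) (tendsto_inv_nhdsGT_zero.comp mapsmul)
    have hℓlim : Tendsto (fun a => ℓ (1/a) / ℓ (1/(r*a))) (𝓝[>] (0:ℝ)) (𝓝 1) := by
      have h := (hℓ r hr).comp hoinv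
      refine h.congr' ?_
      filter_upwards [self_mem_nhdsWithin] with a ha
      have hane : a ≠ 0 := ne_of_gt (Set.mem_Ioi.mp ha)
      have : (1/(r*a)) * r = 1/a := by rw [div_mul_eq_mul_div, div_eq_div_iff (by positivity) (by positivity)]; ring
      simp only [Function.comp]
      rw [this]
    have hG : Tendsto (fun a => (ℓ (1/a) / ℓ (1/(r*a))) ^ α) (𝓝[>] (0:ℝ)) (𝓝 1) := by
      have := hℓlim.rpow_const (p := α) (Or.inl one_ne_zero)
      simpa using this
    have hA : Tendsto (fun a => κ (r*a) / (lam * (r*a) ^ α / ℓ (1/(r*a)) ^ α))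
        (𝓝[>] (0:ℝ)) (𝓝 1) := hκasym.comp mapsmul
    have hcomb : Tendsto (fun a =>
        (κ (r*a) / (lam * (r*a) ^ α / ℓ (1/(r*a)) ^ α)) /
        (κ a / (lam * a ^ α / ℓ (1/a) ^ α)) *
        (r ^ α * (ℓ (1/a) / ℓ (1/(r*a))) ^ α)) (𝓝[>] (0:ℝ)) (𝓝 (r ^ α)) := by
      have := (hA.div hκasym one_ne_zero).mul (hG.const_mul (r ^ α))
      simpa using this
    refine hcomb.congr' ?_
    filter_upwards [self_mem_nhdsWithin] with a ha
    have ha0 : (0:ℝ) < a := ha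
    have hκa : κ a ≠ 0 := ne_of_gt (hκpos a ha0)
    have hκra : (0:ℝ) < κ (r*a) := hκpos _ (mul_pos hr ha0)
    have hl1 : (0:ℝ) < ℓ (1/a) := hℓpos _ (by positivity)
    have hl2 : (0:ℝ) < ℓ (1/(r*a)) := hℓpos _ (by positivity)
    have hra : ((r*a) : ℝ) ^ α = r ^ α * a ^ α := Real.mul_rpow hr.le ha0.le
    have hdiv : (ℓ (1/a) / ℓ (1/(r*a))) ^ α = ℓ (1/a) ^ α / ℓ (1/(r*a)) ^ α :=
      Real.div_rpow hl1.le hl2.le α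
    have haα : (0:ℝ) < a ^ α := Real.rpow_pos_of_pos ha0 _
    have hrα : (0:ℝ) < r ^ α := Real.rpow_pos_of_pos hr _
    have hl1α : (0:ℝ) < ℓ (1/a) ^ α := Real.rpow_pos_of_pos hl1 _
    have hl2α : (0:ℝ) < ℓ (1/(r*a)) ^ α := Real.rpow_pos_of_pos hl2 _
    rw [hra, hdiv]
    field_simp
  -- key: κinv is regularly varying at 0 with index 1/α
  have key : ∀ y : ℝ, 0 < y →
      Tendsto (fun s => κinv (y*s) / κinv s) (𝓝[>] (0:ℝ)) (𝓝 (y ^ (1/α))) := by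
    intro y hy
    have hppos : 0 < y ^ (1/α) := Real.rpow_pos_of_pos hy _
    have hpα : (y ^ (1/α)) ^ α = y := by
      rw [← Real.rpow_mul hy.le, one_div_mul_cancel hαne, Real.rpow_one]
    rw [Metric.tendsto_nhds]
    intro ε hε
    set p := y ^ (1/α) with hp
    have hr2 : p < p + ε/2 := by linarith [half_pos hε]
    have hr2pos : 0 < p + ε/2 := by linarith
    have hr2y : y < (p + ε/2) ^ α := by
      rw [← hpα]; exact Real.rpow_lt_rpow hppos.le hr2 hα0
    set δ := min (ε/2) (p/2) with hδdef
    have hδpos : 0 < δ := lt_min (half_pos hε) (half_pos hppos)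
    have hδle : δ ≤ ε/2 := min_le_left _ _
    have hr1pos : 0 < p - δ := by
      have := min_le_right (ε/2) (p/2); simp only [hδdef]; linarith
    have hr1y : (p - δ) ^ α < y := by
      rw [← hpα]; exact Real.rpow_lt_rpow hr1pos.le (by linarith) hα0
    have h2 := (κratio (p + ε/2) hr2pos).eventually_const_lt hr2y
    have h3 := (κratio (p - δ) hr1pos).eventually_lt_const hr1y
    have h4 := hinvT.eventually (h2.and h3)
    filter_upwards [h4, self_mem_nhdsWithin] with s hs hspos
    have hspos' : (0:ℝ) < s := hspos
    obtain ⟨hk0, hkk, -⟩ := hinv s hspos'.le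
    obtain ⟨hk0', hkk', -⟩ := hinv (y*s) (by positivity)
    have hikpos := hinvpos s hspos'
    rw [hkk] at hs
    have hlt2 : κinv (y*s) < (p + ε/2) * κinv s := by
      have hAA : κ (κinv (y*s)) < κ ((p + ε/2) * κinv s) := by
        rw [hkk']
        exact (lt_div_iff₀ hspos').mp hs.1
      exact (hmono.lt_iff_lt (Set.mem_Ici.mpr hk0')
        (Set.mem_Ici.mpr (by positivity))).mp hAA
    have hlt1 : (p - δ) * κinv s < κinv (y*s) := by
      have hAA : κ ((p - δ) * κinv s) < κ (κinv (y*s)) := by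
        rw [hkk']
        exact (div_lt_iff₀ hspos').mp hs.2
      exact (hmono.lt_iff_lt (Set.mem_Ici.mpr (by positivity))
        (Set.mem_Ici.mpr hk0')).mp hAA
    have hub : κinv (y*s) / κinv s < p + ε/2 := (div_lt_iff₀ hikpos).mpr hlt2
    have hlb : p - δ < κinv (y*s) / κinv s := (lt_div_iff₀ hikpos).mpr hlt1
    rw [Real.dist_eq, abs_sub_lt_iff]
    constructor <;> linarith
  -- define L
  set c := lam ^ (1/α) with hc
  have hcpos : 0 < c := Real.rpow_pos_of_pos hlam _
  set L : ℝ → ℝ := fun x => x ^ (-(1/α)) / (c * κinv (1/x)) with hLdef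
  have hLpos : ∀ x > (0:ℝ), 0 < L x := by
    intro x hx
    exact div_pos (Real.rpow_pos_of_pos hx _)
      (mul_pos hcpos (hinvpos _ (by positivity)))
  have hden : ∀ t : ℝ, 0 < t → t ^ (1/α) / (c * L (1/t)) = κinv t := by
    intro t ht
    have h1 : (1:ℝ)/(1/t) = t := one_div_one_div t
    have h2 : ((1:ℝ)/t) ^ (-(1/α)) = t ^ (1/α) := by
      rw [one_div, Real.inv_rpow ht.le, Real.rpow_neg ht.le, inv_inv]
    have ht' : (0:ℝ) < t ^ (1/α) := Real.rpow_pos_of_pos ht _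
    have hkp : 0 < κinv t := hinvpos t ht
    rw [hLdef]
    simp only [h1, h2]
    field_simp
  have hLsv : ∀ y > (0:ℝ), Tendsto (fun x => L (x * y) / L x) atTop (𝓝 1) := by
    intro y hy
    have hmap : Tendsto (fun x : ℝ => 1/(x*y)) atTop (𝓝[>] (0:ℝ)) := by
      rw [tendsto_nhdsWithin_iff]
      constructor
      · have h0 : Tendsto (fun x : ℝ => x * y) atTop atTop :=
          Tendsto.atTop_mul_const hy tendsto_id
        exact Tendsto.congr (fun x => by simp [one_div]) h0.inv_tendsto_atTop
      · filter_upwards [eventually_gt_atTop (0:ℝ)] with x hx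
        exact Set.mem_Ioi.mpr (by positivity)
    have hk := (key y hy).comp hmap
    have hmul : Tendsto (fun x => y ^ (-(1/α)) *
        (κinv (y * (1/(x*y))) / κinv (1/(x*y)))) atTop
        (𝓝 (y ^ (-(1/α)) * y ^ (1/α))) := by
      exact (hk.const_mul _)
    have hval : y ^ (-(1/α)) * y ^ (1/α) = 1 := by
      rw [Real.rpow_neg hy.le]
      exact inv_mul_cancel₀ (ne_of_gt (Real.rpow_pos_of_pos hy _))
    rw [hval] at hmul
    refine hmul.congr' ?_
    filter_upwards [eventually_gt_atTop (0:ℝ)] with x hx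
    have hxy : (0:ℝ) < x*y := mul_pos hx hy
    have e1 : y * (1/(x*y)) = 1/x := by
      rw [mul_one_div, div_eq_div_iff (by positivity) (by positivity)]; ring
    rw [e1, hLdef]
    simp only
    rw [Real.mul_rpow hx.le hy.le]
    have n1 : x ^ (-(1/α)) ≠ 0 := ne_of_gt (Real.rpow_pos_of_pos hx _)
    have n2 : y ^ (-(1/α)) ≠ 0 := ne_of_gt (Real.rpow_pos_of_pos hy _)
    have n3 : κinv (1/x) ≠ 0 := ne_of_gt (hinvpos _ (by positivity))
    have n4 : κinv (1/(x*y)) ≠ 0 := ne_of_gt (hinvpos _ (by positivity))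
    field_simp
  have hT1 : Tendsto (fun t => κinv t / (t ^ (1/α) / (c * L (1/t))))
      (𝓝[>] (0:ℝ)) (𝓝 1) := by
    refine Tendsto.congr' ?_ tendsto_const_nhds
    filter_upwards [self_mem_nhdsWithin] with t ht
    rw [hden t ht, div_self (ne_of_gt (hinvpos t ht))]
  -- the gV part
  set u : ℝ → ℝ := fun s => -Real.log (1 - s) with hudef
  have hu_cont : Tendsto u (𝓝[>] (0:ℝ)) (𝓝 0) := by
    have h0 : ContinuousAt u 0 := by
      have : ContinuousAt (fun s : ℝ => Real.log (1 - s)) 0 :=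
        (Real.continuousAt_log (by norm_num)).comp
          ((continuous_const.sub continuous_id).continuousAt)
      exact this.neg
    have h1 := h0.tendsto.mono_left (nhdsWithin_le_nhds (s := Set.Ioi (0:ℝ)))
    simpa [hudef] using h1
  have hu_pos : ∀ s : ℝ, 0 < s → s < 1 → 0 < u s := by
    intro s h1 h2
    simp only [hudef]
    have := Real.log_neg (x := 1 - s) (by linarith) (by linarith)
    linarith
  have hu_T : Tendsto u (𝓝[>] (0:ℝ)) (𝓝[>] (0:ℝ)) := by
    rw [tendsto_nhdsWithin_iff]
    refine ⟨hu_cont, ?_⟩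
    filter_upwards [Ioo_mem_nhdsGT_of_mem (Set.mem_Ico.mpr ⟨le_rfl, one_pos⟩)] with s hs
    exact Set.mem_Ioi.mpr (hu_pos s hs.1 hs.2)
  have hsu : ∀ s : ℝ, 0 < s → s < 1 → s ≤ u s := by
    intro s h1 h2
    have hlog : Real.log (1 - s) ≤ -s := by
      rw [Real.log_le_iff_le_exp (by linarith)]
      linarith [Real.add_one_le_exp (-s)]
    simp only [hudef]; linarith
  have hslope : Tendsto (fun s => u s / s) (𝓝[>] (0:ℝ)) (𝓝 1) := by
    have hd : HasDerivAt (fun s : ℝ => -Real.log (1 - s)) 1 0 := by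
      have h1 : HasDerivAt (fun s : ℝ => 1 - s) (-1) 0 := (hasDerivAt_id (0:ℝ)).const_sub 1
      have h2 : HasDerivAt Real.log ((1:ℝ) - 0)⁻¹ ((1:ℝ) - 0) :=
        Real.hasDerivAt_log (by norm_num)
      have h3 := h2.comp 0 h1
      have h4 := h3.neg
      norm_num at h4
      exact h4
    have h5 := hasDerivAt_iff_tendsto_slope.mp hd
    have h6 := h5.mono_left (nhdsWithin_mono 0
      (fun x hx => Set.mem_compl_singleton_iff.mpr (ne_of_gt hx) :
        Set.Ioi (0:ℝ) ⊆ {(0:ℝ)}ᶜ))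
    refine h6.congr' ?_
    filter_upwards [self_mem_nhdsWithin] with s hs
    simp [slope_def_field, hudef]
  have hexpT : Tendsto (fun s => Real.exp (-(κinv (u s)))) (𝓝[>] (0:ℝ)) (𝓝 1) := by
    have hk : Tendsto (fun s => κinv (u s)) (𝓝[>] (0:ℝ)) (𝓝 0) := hinvT0.comp hu_T
    have h7 : Tendsto (fun x : ℝ => Real.exp (-x)) (𝓝 0) (𝓝 1) := by
      have := (Real.continuous_exp.comp continuous_neg).tendsto 0
      simpa [Function.comp_def] using this
    exact h7.comp hk
  have hT2 : Tendsto (fun s => (1 - gV (1 - s)) / (s ^ (1/α) / (c * L (1/s))))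
      (𝓝[>] (0:ℝ)) (𝓝 1) := by
    rw [Metric.tendsto_nhds]
    intro ε hε
    have hεα : (1:ℝ) < (1 + ε/2) ^ α :=
      (Real.one_lt_rpow_iff_of_pos (by linarith)).mpr (Or.inl ⟨by linarith, hα0⟩)
    set δ := (1 + ε/2) ^ α - 1 with hδdef
    have hδpos : 0 < δ := by simp only [hδdef]; linarith
    have h1δ : ((1:ℝ) + δ) ^ (1/α) = 1 + ε/2 := by
      have e : (1:ℝ) + δ = (1 + ε/2) ^ α := by simp only [hδdef]; ring
      rw [e, ← Real.rpow_mul (by linarith), mul_one_div_cancel hαne, Real.rpow_one]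
    have E1 : ∀ᶠ s in 𝓝[>] (0:ℝ), κinv ((1+δ)*s) / κinv s < 1 + ε := by
      have hk := key (1+δ) (by linarith)
      rw [h1δ] at hk
      exact hk.eventually_lt_const (by linarith)
    have E2 : ∀ᶠ s in 𝓝[>] (0:ℝ), u s / s < 1 + δ :=
      hslope.eventually_lt_const (by linarith)
    have E3 : ∀ᶠ s in 𝓝[>] (0:ℝ), 1 - ε < Real.exp (-(κinv (u s))) :=
      hexpT.eventually_const_lt (by linarith)
    filter_upwards [E1, E2, E3,
      Ioo_mem_nhdsGT_of_mem (Set.mem_Ico.mpr ⟨le_rfl, one_pos⟩)] with s h1 h2 h3 hs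
    obtain ⟨hs0, hs1⟩ := hs
    have hupos := hu_pos s hs0 hs1
    have hgve : gV (1 - s) = Real.exp (-(κinv (u s))) := by
      have hx := hgv (u s) hupos.le
      have he : Real.exp (-(u s)) = 1 - s := by
        simp only [hudef, neg_neg]
        exact Real.exp_log (by linarith)
      rwa [he] at hx
    rw [hgve, hden s hs0]
    set a := κinv s with ha
    set b := κinv (u s) with hb
    have hapos : 0 < a := hinvpos s hs0
    have hab : a ≤ b := hinvmono s (u s) hs0.le (hsu s hs0 hs1)
    have hupper : (1 - Real.exp (-b)) / a < 1 + ε := by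
      have hb2 : b ≤ κinv ((1+δ)*s) :=
        hinvmono _ _ hupos.le (le_of_lt ((div_lt_iff₀ hs0).mp h2))
      have h5 : 1 - Real.exp (-b) ≤ b := by linarith [Real.add_one_le_exp (-b)]
      calc (1 - Real.exp (-b)) / a ≤ b / a := by
            exact (div_le_div_iff_of_pos_right hapos).mpr h5
        _ ≤ κinv ((1+δ)*s) / a := by exact (div_le_div_iff_of_pos_right hapos).mpr hb2
        _ < 1 + ε := h1
    have hlower : 1 - ε < (1 - Real.exp (-b)) / a := by
      have hEb : Real.exp (-b) * Real.exp b = 1 := by rw [← Real.exp_add]; simp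
      have h6 : Real.exp (-b) * b ≤ 1 - Real.exp (-b) := by
        have h7 : 0 ≤ Real.exp (-b) * (Real.exp b - 1 - b) :=
          mul_nonneg (Real.exp_pos _).le (by linarith [Real.add_one_le_exp b])
        nlinarith [h7, hEb]
      have h8 : Real.exp (-b) ≤ (1 - Real.exp (-b)) / a := by
        rw [le_div_iff₀ hapos]
        calc Real.exp (-b) * a ≤ Real.exp (-b) * b :=
              mul_le_mul_of_nonneg_left hab (Real.exp_pos _).le
          _ ≤ 1 - Real.exp (-b) := h6
      linarith [h3]
    rw [Real.dist_eq, abs_sub_lt_iff]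
    constructor <;> linarith
  exact ⟨L, hLsv, hLpos, hT1, hT2⟩
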